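/- Let θ ∈ (0, π/2), λ ∈ (0, 2], and c ∈ (0, 1) with c²·cos²(2θ) − 2c + 1 < 0. Then the monic quadratic z² − (λ(c·cos 2θ − 1) + 2)·z + (λ²·c·sin²θ + λ(c·cos 2θ − 1) + 1) has two nonreal complex-conjugate roots, and each root has modulus √(c·λ²·sin²θ − (1 − c·cos 2θ)·λ + 1); in particular c·λ²·sin²θ − (1 − c·cos 2θ)·λ + 1 > 0. -/

import Mathlib

open Real

/-- When the discriminant `c² cos²(2θ) - 2c + 1` is negative, the quadratic
factor of the Douglas–Rachford characteristic polynomial has two nonreal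
complex-conjugate roots of common modulus
`√(c λ² sin²θ - (1 - c cos 2θ) λ + 1)`; in particular that quantity under the
square root is positive. -/
theorem stmt9 (θ lam c : ℝ) (hθ : θ ∈ Set.Ioo 0 (π / 2))
    (hlam : lam ∈ Set.Ioc (0 : ℝ) 2) (hc : c ∈ Set.Ioo (0 : ℝ) 1)
    (hdisc : c ^ 2 * cos (2 * θ) ^ 2 - 2 * c + 1 < 0) :
    0 < c * lam ^ 2 * sin θ ^ 2 - (1 - c * cos (2 * θ)) * lam + 1 ∧
    ∃ z : ℂ, z.im ≠ 0 ∧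
      (∀ w : ℂ,
        w ^ 2 - Complex.ofReal (lam * (c * cos (2 * θ) - 1) + 2) * w
            + Complex.ofReal (lam ^ 2 * c * sin θ ^ 2 + lam * (c * cos (2 * θ) - 1) + 1) = 0
          ↔ w = z ∨ w = (starRingEnd ℂ) z) ∧
      ‖z‖
        = Real.sqrt (c * lam ^ 2 * sin θ ^ 2 - (1 - c * cos (2 * θ)) * lam + 1) := by
  obtain ⟨hl1, hl2⟩ := hlam
  set b := lam * (c * cos (2 * θ) - 1) + 2 with hb
  set q := lam ^ 2 * c * sin θ ^ 2 + lam * (c * cos (2 * θ) - 1) + 1 with hqdef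
  clear_value b q
  have hcos2 : cos (2 * θ) = 1 - 2 * sin θ ^ 2 := by
    rw [Real.cos_two_mul]
    have := Real.sin_sq_add_cos_sq θ
    linarith
  have hkey : 4 * q - b ^ 2 = -(lam ^ 2 * (c ^ 2 * cos (2 * θ) ^ 2 - 2 * c + 1)) := by
    rw [hqdef, hb, hcos2]; ring
  have hlam2 : 0 < lam ^ 2 := by positivity
  have h4 : 0 < 4 * q - b ^ 2 := by rw [hkey]; nlinarith
  have hb24 : (b / 2) ^ 2 = b ^ 2 / 4 := by ring
  have hpos : (b / 2) ^ 2 < q := by linarith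
  have hq0 : 0 < q := lt_of_le_of_lt (sq_nonneg (b / 2)) hpos
  have heq : c * lam ^ 2 * sin θ ^ 2 - (1 - c * cos (2 * θ)) * lam + 1 = q := by
    rw [hqdef]; ring
  set s := Real.sqrt (q - (b / 2) ^ 2) with hs
  clear_value s
  have hs2 : s ^ 2 = q - (b / 2) ^ 2 := by rw [hs]; exact Real.sq_sqrt (by linarith)
  have hspos : 0 < s := by rw [hs]; exact Real.sqrt_pos.mpr (by linarith)
  have hq' : q = (b / 2) ^ 2 + s ^ 2 := by linarith
  refine ⟨by rw [heq]; exact hq0, (((b / 2 : ℝ) : ℂ) + (s : ℝ) * Complex.I), ?_, ?_, ?_⟩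
  · simp [hspos.ne']
  · have hzconj : (starRingEnd ℂ) (((b / 2 : ℝ) : ℂ) + (s : ℝ) * Complex.I)
        = ((b / 2 : ℝ) : ℂ) - (s : ℝ) * Complex.I := by
      rw [map_add, map_mul, Complex.conj_ofReal, Complex.conj_ofReal, Complex.conj_I]; ring
    intro w
    have hfact : w ^ 2 - (b : ℂ) * w + (q : ℂ)
        = (w - (((b / 2 : ℝ) : ℂ) + (s : ℝ) * Complex.I))
          * (w - (((b / 2 : ℝ) : ℂ) - (s : ℝ) * Complex.I)) := by
      have hqc : (q : ℂ) = ((b / 2 : ℝ) : ℂ) ^ 2 + ((s : ℝ) : ℂ) ^ 2 := by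
        rw [hq']; push_cast; ring
      rw [hqc]
      push_cast
      linear_combination ((s : ℝ) : ℂ) ^ 2 * Complex.I_sq
    rw [hzconj, hfact, mul_eq_zero, sub_eq_zero, sub_eq_zero]
  · rw [heq, Complex.norm_def]
    have : Complex.normSq (((b / 2 : ℝ) : ℂ) + (s : ℝ) * Complex.I) = q := by
      simp [Complex.normSq_apply]
      nlinarith
    rw [this]
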